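/- (Proposition 3.2, bounds on the auxiliary variable g.) Fix Ū > 0, d > 0, k > 0, γ > 1, X̄ > 0, N_t, N_x ∈ ℕ, Δt > 0 with Δt < 1/(Ū + d + k Ū^γ), and a grid x_j = j Δx for j = 0,…,N_x with x_{N_x} = X̄. Let ρ : [0,∞) → [0,∞) be convex and strictly increasing. Suppose g_{i,j} : (0,∞) → ℝ (for i = 0,…,N_t and j = 0,…,N_x) and θ̂_{i,j} ∈ [0, Ū] satisfy: g_{N_t, j}(w) = ρ(w x_j) for all j and w > 0; g_{i,0}(w) = ρ(0) for all i and w > 0; and for 0 ≤ i < N_t and 1 ≤ j ≤ N_x, g_{i,j}(w) = g_{i+1,j}(w) + Δt [ θ̂_{i,j} (g_{i+1,j-1}(w) - g_{i+1,j}(w)) + (d + k θ̂_{i,j}^γ)(g_{i+1,0}(w) - g_{i+1,j}(w)) ]. Then for all i, j, and w > 0, ρ(0) ≤ g_{i,j}(w) ≤ ρ(w X̄). -/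

import Mathlib

open Real Set

/-- Proposition 3.2, bounds on the auxiliary variable g of the explicit finite
difference scheme: under the time-step restriction Δt < 1/(Ū + d + k Ū^γ), the
numerical solutions g remain between ρ(0) and ρ(w X̄). -/
theorem discrete_g_bounds
    (Ubar d k γ Xbar Δt Δx : ℝ) (Nt Nx : ℕ)
    (hU : 0 < Ubar) (hd : 0 < d) (hk : 0 < k) (hγ : 1 < γ) (hX : 0 < Xbar)
    (hΔt : 0 < Δt) (hΔt' : Δt < 1 / (Ubar + d + k * Ubar ^ γ))
    (hΔx : 0 < Δx)
    (x : ℕ → ℝ) (hx : ∀ j : ℕ, x j = (j : ℝ) * Δx) (hxN : x Nx = Xbar)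
    (ρ : ℝ → ℝ)
    (hρconv : ConvexOn ℝ (Ici 0) ρ)
    (hρmono : StrictMonoOn ρ (Ici 0))
    (hρnn : ∀ y : ℝ, 0 ≤ y → 0 ≤ ρ y)
    (g : ℕ → ℕ → ℝ → ℝ) (θ : ℕ → ℕ → ℝ)
    (hθ : ∀ i j : ℕ, θ i j ∈ Icc 0 Ubar)
    (hterm : ∀ j : ℕ, ∀ w : ℝ, 0 < w → g Nt j w = ρ (w * x j))
    (hbdry : ∀ i : ℕ, ∀ w : ℝ, 0 < w → g i 0 w = ρ 0)
    (hrec : ∀ i j : ℕ, ∀ w : ℝ, i < Nt → 1 ≤ j → j ≤ Nx → 0 < w →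
      g i j w = g (i+1) j w + Δt *
        (θ i j * (g (i+1) (j-1) w - g (i+1) j w)
          + (d + k * θ i j ^ γ) * (g (i+1) 0 w - g (i+1) j w))) :
    ∀ i j : ℕ, ∀ w : ℝ, i ≤ Nt → j ≤ Nx → 0 < w →
      ρ 0 ≤ g i j w ∧ g i j w ≤ ρ (w * Xbar) := by

  have hS : 0 < Ubar + d + k * Ubar ^ γ := by positivity
  have hΔtS : Δt * (Ubar + d + k * Ubar ^ γ) < 1 := by
    have := (lt_div_iff₀ hS).mp hΔt'
    linarith
  have hmono := hρmono.monotoneOn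
  have hterm_bounds : ∀ j : ℕ, j ≤ Nx → ∀ w : ℝ, 0 < w →
      ρ 0 ≤ ρ (w * x j) ∧ ρ (w * x j) ≤ ρ (w * Xbar) := by
    intro j hj w hw
    have hxj : 0 ≤ x j := by rw [hx]; positivity
    have hxjX : x j ≤ Xbar := by
      rw [hx, ← hxN, hx Nx]
      exact mul_le_mul_of_nonneg_right (Nat.cast_le.mpr hj) hΔx.le
    have h1 : (0:ℝ) ≤ w * x j := mul_nonneg hw.le hxj
    have h2 : (0:ℝ) ≤ w * Xbar := mul_nonneg hw.le hX.le
    exact ⟨hmono (Set.mem_Ici.mpr (le_refl 0)) h1 h1, hmono h1 h2 (mul_le_mul_of_nonneg_left hxjX hw.le)⟩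
  suffices key : ∀ m i : ℕ, Nt - i = m → i ≤ Nt → ∀ j : ℕ, j ≤ Nx → ∀ w : ℝ, 0 < w →
      ρ 0 ≤ g i j w ∧ g i j w ≤ ρ (w * Xbar) by
    intro i j w hi hj hw
    exact key (Nt - i) i rfl hi j hj w hw
  intro m
  induction m with
  | zero =>
    intro i hm hi j hj w hw
    have : i = Nt := by omega
    subst this
    rw [hterm j w hw]
    exact hterm_bounds j hj w hw
  | succ m ih =>
    intro i hm hi j hj w hw
    have hiNt : i < Nt := by omega
    have hρ0wX : ρ 0 ≤ ρ (w * Xbar) := by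
      have h2 : (0:ℝ) ≤ w * Xbar := mul_nonneg hw.le hX.le
      exact hmono (Set.mem_Ici.mpr (le_refl 0)) h2 h2
    rcases Nat.eq_zero_or_pos j with hj0 | hj1
    · subst hj0
      rw [hbdry i w hw]
      exact ⟨le_refl _, hρ0wX⟩
    · have hb0 := ih (i+1) (by omega) (by omega) 0 (Nat.zero_le _) w hw
      have hbj := ih (i+1) (by omega) (by omega) j hj w hw
      have hbj1 := ih (i+1) (by omega) (by omega) (j-1) (by omega) w hw
      rw [hrec i j w hiNt hj1 hj hw]
      obtain ⟨hθ0, hθU⟩ := hθ i j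
      have hθγ : θ i j ^ γ ≤ Ubar ^ γ := Real.rpow_le_rpow hθ0 hθU (by linarith)
      have hθγ0 : 0 ≤ θ i j ^ γ := Real.rpow_nonneg hθ0 γ
      have hA : 0 ≤ Δt * θ i j := mul_nonneg hΔt.le hθ0
      have hB : 0 ≤ Δt * (d + k * θ i j ^ γ) :=
        mul_nonneg hΔt.le (by nlinarith)
      have hAB : Δt * θ i j + Δt * (d + k * θ i j ^ γ) < 1 := by
        have : Δt * θ i j + Δt * (d + k * θ i j ^ γ) ≤
            Δt * (Ubar + d + k * Ubar ^ γ) := by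
          nlinarith [mul_nonneg hΔt.le (sub_nonneg.mpr hθU),
            mul_nonneg (mul_nonneg hΔt.le hk.le) (sub_nonneg.mpr hθγ)]
        linarith
      have hC : 0 ≤ 1 - Δt * θ i j - Δt * (d + k * θ i j ^ γ) := by linarith
      constructor
      · nlinarith [mul_nonneg hC (sub_nonneg.mpr hbj.1),
          mul_nonneg hA (sub_nonneg.mpr hbj1.1),
          mul_nonneg hB (sub_nonneg.mpr hb0.1)]
      · nlinarith [mul_nonneg hC (sub_nonneg.mpr hbj.2),
          mul_nonneg hA (sub_nonneg.mpr hbj1.2),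
          mul_nonneg hB (sub_nonneg.mpr hb0.2)]
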